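/- For integers m ≥ 2 and k ≥ 1, the anti-van der Waerden number aw(P_m □ C_{2k+1}, 3) = 3. -/

import Mathlib

open SimpleGraph

/-- A rainbow 3-AP in `G` under coloring `c`: three vertices with
`d(v₁,v₂) = d(v₂,v₃)` receiving pairwise distinct colors. -/
def HasRainbow3AP {V C : Type*} (G : SimpleGraph V) (c : V → C) : Prop :=
  ∃ v₁ v₂ v₃ : V, G.dist v₁ v₂ = G.dist v₂ v₃ ∧
    c v₁ ≠ c v₂ ∧ c v₂ ≠ c v₃ ∧ c v₁ ≠ c v₃

/-- The anti-van der Waerden number `aw(G,3)`: the least positive `r` such that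
every surjective coloring with `r` colors yields a rainbow 3-AP. -/
noncomputable def aw {V : Type*} (G : SimpleGraph V) : ℕ :=
  sInf {r : ℕ | 0 < r ∧ ∀ c : V → Fin r, Function.Surjective c → HasRainbow3AP G c}

namespace AWProof

open scoped Fin.CommRing

/-! ### Circular distance toolkit -/

/-- circular distance of an element of `Fin (2k+1)` from 0. -/
def cd (k : ℕ) (e : Fin (2*k+1)) : ℕ := min e.val (2*k+1 - e.val)

variable {k m : ℕ}

lemma val_cast_of_le {j : ℕ} (h : j < 2*k+1) : ((j : Fin (2*k+1))).val = j := by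
  rw [Fin.val_natCast]; exact Nat.mod_eq_of_lt h

lemma cd_le_k (e : Fin (2*k+1)) : cd k e ≤ k := by
  have := e.isLt; unfold cd; omega

lemma cd_zero : cd k (0 : Fin (2*k+1)) = 0 := by
  unfold cd; simp

lemma cd_eq_zero_iff (e : Fin (2*k+1)) : cd k e = 0 ↔ e = 0 := by
  unfold cd
  constructor
  · intro h
    have := e.isLt
    have : e.val = 0 := by omega
    exact Fin.ext this
  · intro h; subst h; simp

lemma neg_val (e : Fin (2*k+1)) (h : e ≠ 0) : (-e).val = 2*k+1 - e.val := by
  have h0 : e.val ≠ 0 := fun hh => h (Fin.ext hh)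
  have h1 := e.isLt
  have : (-e) = 0 - e := by ring
  rw [this, Fin.sub_def]
  simp only [Fin.val_zero]
  rw [Nat.mod_eq_of_lt (by omega)]
  omega

lemma cd_neg (e : Fin (2*k+1)) : cd k (-e) = cd k e := by
  by_cases h : e = 0
  · subst h; simp
  · have h1 := e.isLt
    have h0 : e.val ≠ 0 := fun hh => h (Fin.ext hh)
    unfold cd
    rw [neg_val e h]
    omega

lemma cd_cast {j : ℕ} (h : j ≤ k) : cd k ((j : Fin (2*k+1))) = j := by
  unfold cd
  rw [val_cast_of_le (by omega)]
  omega

lemma cd_cast_k1 (hk : 1 ≤ k) : cd k (((k+1 : ℕ) : Fin (2*k+1))) = k := by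
  unfold cd
  rw [val_cast_of_le (by omega)]
  omega

lemma neg_cast_k : -((k : ℕ) : Fin (2*k+1)) = ((k+1 : ℕ) : Fin (2*k+1)) := by
  have : ((k : ℕ) : Fin (2*k+1)) + ((k+1 : ℕ) : Fin (2*k+1)) = (((2*k+1 : ℕ)) : Fin (2*k+1)) := by
    push_cast; ring
  rw [Fin.natCast_self] at this
  linear_combination -this

lemma cd_eq_cases {j : ℕ} (e : Fin (2*k+1)) (hj : j ≤ k) (h : cd k e = j) :
    e = ((j : ℕ) : Fin (2*k+1)) ∨ e = -((j : ℕ) : Fin (2*k+1)) := by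
  have h1 := e.isLt
  unfold cd at h
  rcases le_or_gt e.val k with hv | hv
  · left
    have : e.val = j := by omega
    apply Fin.ext
    rw [val_cast_of_le (by omega)]; exact this
  · right
    have hev : e.val = 2*k+1 - j := by omega
    have hj0 : j ≠ 0 := by omega
    have : ((j : ℕ) : Fin (2*k+1)) ≠ 0 := by
      intro hh
      have := congrArg Fin.val hh
      rw [val_cast_of_le (by omega)] at this
      simp only [Fin.val_zero] at this
      omega
    apply Fin.ext
    rw [neg_val _ this, val_cast_of_le (by omega)]
    omega

/-- cast-subtraction: for naturals `b ≤ a`, `↑a - ↑b = ↑(a-b)` -/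
lemma cast_sub_cast {a b : ℕ} (h : b ≤ a) :
    ((a : ℕ) : Fin (2*k+1)) - ((b : ℕ) : Fin (2*k+1)) = (((a - b : ℕ)) : Fin (2*k+1)) := by
  rw [Nat.cast_sub h]

lemma cd_cast_sub {a b : ℕ} (hba : b ≤ a) (h : a - b ≤ k) :
    cd k (((a : ℕ) : Fin (2*k+1)) - ((b : ℕ) : Fin (2*k+1))) = a - b := by
  rw [cast_sub_cast hba, cd_cast h]

lemma cd_cast_sub' {a b : ℕ} (hab : a ≤ b) (h : b - a ≤ k) :
    cd k (((a : ℕ) : Fin (2*k+1)) - ((b : ℕ) : Fin (2*k+1))) = b - a := by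
  have : ((a : ℕ) : Fin (2*k+1)) - ((b : ℕ) : Fin (2*k+1))
      = -(((b : ℕ) : Fin (2*k+1)) - ((a : ℕ) : Fin (2*k+1))) := by ring
  rw [this, cd_neg, cast_sub_cast hab, cd_cast h]

/-- step lemmas for the lower bound on graph distance -/
lemma cd_add_one (e : Fin (2*k+1)) : cd k (e + 1) ≤ cd k e + 1 := by
  have h1 := e.isLt
  have hv : (e + 1).val = (e.val + 1) % (2*k+1) := by
    rw [Fin.add_def, Fin.val_one']
    conv_rhs => rw [Nat.add_mod, Nat.mod_eq_of_lt h1]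
  unfold cd
  rcases Nat.lt_or_ge (e.val + 1) (2*k+1) with h | h
  · rw [hv, Nat.mod_eq_of_lt h]; omega
  · have : (e.val + 1) % (2*k+1) = 0 := by
      have : e.val + 1 = 2*k+1 := by omega
      simp [this]
    rw [hv, this]; omega

lemma cd_sub_one (e : Fin (2*k+1)) : cd k (e - 1) ≤ cd k e + 1 := by
  calc cd k (e-1) = cd k (-(e-1)) := (cd_neg _).symm
    _ = cd k ((-e)+1) := by congr 1; ring
    _ ≤ cd k (-e) + 1 := cd_add_one _
    _ = cd k e + 1 := by rw [cd_neg]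

/-! ### The distance function on the grid -/

/-- Explicit distance on `P_m □ C_{2k+1}`. -/
def D (k : ℕ) (u v : Fin m × Fin (2*k+1)) : ℕ :=
  Nat.dist u.1.val v.1.val + cd k (u.2 - v.2)

lemma D_comm (u v : Fin m × Fin (2*k+1)) : D k u v = D k v u := by
  unfold D
  rw [Nat.dist_comm]
  have : v.2 - u.2 = -(u.2 - v.2) := by ring
  rw [this, cd_neg]

lemma D_self (u : Fin m × Fin (2*k+1)) : D k u u = 0 := by
  unfold D; simp [Nat.dist_self, cd_zero]


/-! ### Walk/val helpers -/

lemma one_val (hk : 1 ≤ k) : (1 : Fin (2*k+1)).val = 1 := by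
  rw [Fin.val_one']; exact Nat.mod_eq_of_lt (by omega)

lemma add_val (a b : Fin (2*k+1)) : (a + b).val = (a.val + b.val) % (2*k+1) := by
  rw [Fin.add_def]

lemma sub_val (a b : Fin (2*k+1)) : (a - b).val = (2*k+1 - b.val + a.val) % (2*k+1) := by
  rw [Fin.sub_def]

lemma sub_one_val (hk : 1 ≤ k) (e : Fin (2*k+1)) (h : e ≠ 0) : (e - 1).val = e.val - 1 := by
  have h1 := e.isLt
  have h0 : e.val ≠ 0 := fun hh => h (Fin.ext hh)
  rw [sub_val, one_val hk]
  have h2 : 2*k+1 - 1 + e.val = (2*k+1) + (e.val - 1) := by omega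
  rw [h2, Nat.add_mod_left]
  exact Nat.mod_eq_of_lt (by omega)

lemma add_one_val (hk : 1 ≤ k) (e : Fin (2*k+1)) (h : e.val < 2*k) : (e + 1).val = e.val + 1 := by
  rw [add_val, one_val hk]
  exact Nat.mod_eq_of_lt (by omega)

lemma path_walk_exists (m : ℕ) : ∀ (d : ℕ) (i j : Fin m), Nat.dist i.val j.val = d →
    ∃ w : (pathGraph m).Walk i j, w.length = d := by
  intro d
  induction d with
  | zero =>
    intro i j h
    have : i = j := Fin.ext (Nat.eq_of_dist_eq_zero h)
    subst this
    exact ⟨.nil, rfl⟩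
  | succ d ih =>
    intro i j h
    have hne : i.val ≠ j.val := by
      intro hh
      rw [hh, Nat.dist_self] at h
      omega
    rcases lt_or_gt_of_ne hne with hlt | hgt
    · have hi1 : i.val + 1 < m := by have := j.isLt; omega
      have hadj : (pathGraph m).Adj i ⟨i.val+1, hi1⟩ := by
        rw [pathGraph_adj]; left; rfl
      have hd : Nat.dist (i.val+1) j.val = d := by
        unfold Nat.dist at *; omega
      obtain ⟨w, hw⟩ := ih ⟨i.val+1, hi1⟩ j hd
      exact ⟨.cons hadj w, by simp [hw]⟩
    · have hi1 : i.val - 1 < m := by have := i.isLt; omega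
      have hadj : (pathGraph m).Adj i ⟨i.val-1, hi1⟩ := by
        rw [pathGraph_adj]; right; simp; omega
      have hd : Nat.dist (i.val-1) j.val = d := by
        unfold Nat.dist at *; omega
      obtain ⟨w, hw⟩ := ih ⟨i.val-1, hi1⟩ j hd
      exact ⟨.cons hadj w, by simp [hw]⟩

lemma cycle_walk_exists (hk : 1 ≤ k) : ∀ (d : ℕ) (a b : Fin (2*k+1)), cd k (a - b) = d →
    ∃ w : (cycleGraph (2*k+1)).Walk a b, w.length = d := by
  intro d
  induction d with
  | zero =>
    intro a b h
    have : a - b = 0 := (cd_eq_zero_iff _).1 h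
    have : a = b := by linear_combination this
    subst this
    exact ⟨.nil, rfl⟩
  | succ d ih =>
    intro a b h
    have he0 : a - b ≠ 0 := by
      intro hh
      rw [hh, cd_zero] at h
      omega
    have h1 := (a - b).isLt
    have h0 : (a - b).val ≠ 0 := fun hh => he0 (Fin.ext hh)
    rcases le_or_gt (a - b).val k with hv | hv
    · -- step a → a - 1
      have hadj : (cycleGraph (2*k+1)).Adj a (a - 1) := by
        rw [cycleGraph_adj']
        left
        have : a - (a - 1) = 1 := by ring
        rw [this, one_val hk]
      have heq : (a - 1) - b = (a - b) - 1 := by ring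
      have hcd : cd k ((a-1) - b) = d := by
        rw [heq]
        unfold cd at h ⊢
        rw [sub_one_val hk _ he0]
        omega
      obtain ⟨w, hw⟩ := ih (a-1) b hcd
      exact ⟨.cons hadj w, by simp [hw]⟩
    · -- step a → a + 1
      have hadj : (cycleGraph (2*k+1)).Adj a (a + 1) := by
        rw [cycleGraph_adj']
        right
        have : (a + 1) - a = 1 := by ring
        rw [this, one_val hk]
      have heq : (a + 1) - b = (a - b) + 1 := by ring
      have hcd : cd k ((a+1) - b) = d := by
        rw [heq]
        unfold cd at h ⊢
        rcases lt_or_ge ((a-b).val) (2*k) with hlt | hge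
        · rw [add_one_val hk _ hlt]; omega
        · have hval : (a - b).val = 2*k := by omega
          have : (a - b) + 1 = 0 := by
            apply Fin.ext
            rw [add_val, one_val hk, hval]
            simp
          rw [this]
          simp only [Fin.val_zero]
          omega
      obtain ⟨w, hw⟩ := ih (a+1) b hcd
      exact ⟨.cons hadj w, by simp [hw]⟩

/-! ### Distance equals D -/

lemma grid_walk_exists (hk : 1 ≤ k) (u v : Fin m × Fin (2*k+1)) :
    ∃ w : (pathGraph m □ cycleGraph (2*k+1)).Walk u v, w.length = D k u v := by
  obtain ⟨w1, hw1⟩ := path_walk_exists m (Nat.dist u.1.val v.1.val) u.1 v.1 rfl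
  obtain ⟨w2, hw2⟩ := cycle_walk_exists hk (cd k (u.2 - v.2)) u.2 v.2 rfl
  refine ⟨((w1.boxProdLeft (H := cycleGraph (2*k+1)) u.2).append
    (w2.boxProdRight (pathGraph m) v.1)).copy (by simp) (by simp), ?_⟩
  rw [Walk.length_copy, Walk.length_append]
  unfold D
  exact congrArg₂ (· + ·) ((Walk.length_map _ w1).trans hw1) ((Walk.length_map _ w2).trans hw2)

lemma D_le_length (hk : 1 ≤ k) {u v : Fin m × Fin (2*k+1)}
    (w : (pathGraph m □ cycleGraph (2*k+1)).Walk u v) : D k u v ≤ w.length := by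
  induction w with
  | nil => rw [D_self]; omega
  | @cons a x b hadj p ih =>
    rw [Walk.length_cons]
    have hstep : D k a b ≤ D k x b + 1 := by
      rw [boxProd_adj] at hadj
      rcases hadj with ⟨hp, h2⟩ | ⟨hc, h1⟩
      · rw [pathGraph_adj] at hp
        unfold D
        rw [h2]
        have : Nat.dist a.1.val b.1.val ≤ Nat.dist x.1.val b.1.val + 1 := by
          unfold Nat.dist; omega
        omega
      · rw [cycleGraph_adj'] at hc
        unfold D
        rw [h1]
        have hcd : cd k (a.2 - b.2) ≤ cd k (x.2 - b.2) + 1 := by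
          rcases hc with hc | hc
          · have : a.2 - x.2 = 1 := by
              apply Fin.ext; rw [hc, one_val hk]
            have heq : a.2 - b.2 = (x.2 - b.2) + 1 := by linear_combination this
            rw [heq]; exact cd_add_one _
          · have : x.2 - a.2 = 1 := by
              apply Fin.ext; rw [hc, one_val hk]
            have heq : a.2 - b.2 = (x.2 - b.2) - 1 := by linear_combination -this
            rw [heq]; exact cd_sub_one _
        omega
    omega

lemma dist_eq_D (hk : 1 ≤ k) (u v : Fin m × Fin (2*k+1)) :
    (pathGraph m □ cycleGraph (2*k+1)).dist u v = D k u v := by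
  obtain ⟨w0, hw0⟩ := grid_walk_exists hk u v
  apply le_antisymm
  · calc (pathGraph m □ cycleGraph (2*k+1)).dist u v ≤ w0.length := SimpleGraph.dist_le w0
      _ = D k u v := hw0
  · obtain ⟨w, hw⟩ := Reachable.exists_walk_length_eq_dist ⟨w0⟩
    rw [← hw]
    exact D_le_length hk w


/-! ### Rainbow predicate over D -/

def Rb (k : ℕ) {m : ℕ} (c : Fin m × Fin (2*k+1) → Fin 3) : Prop :=
  ∃ v₁ v₂ v₃, D k v₁ v₂ = D k v₂ v₃ ∧ c v₁ ≠ c v₂ ∧ c v₂ ≠ c v₃ ∧ c v₁ ≠ c v₃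

variable {c : Fin m × Fin (2*k+1) → Fin 3}

lemma nr_elim (hnr : ¬ Rb k c) {v₁ v₂ v₃ : Fin m × Fin (2*k+1)} (hd : D k v₁ v₂ = D k v₂ v₃)
    (h12 : c v₁ ≠ c v₂) (h23 : c v₂ ≠ c v₃) (h13 : c v₁ ≠ c v₃) : False :=
  hnr ⟨v₁, v₂, v₃, hd, h12, h23, h13⟩

lemma tri {P Q R : Fin 3} (hPQ : P ≠ Q) (hQR : Q ≠ R) (hPR : P ≠ R) (v : Fin 3) :
    v = P ∨ v = Q ∨ v = R := by
  have hP := P.isLt; have hQ := Q.isLt; have hR := R.isLt; have hv := v.isLt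
  simp only [ne_eq, Fin.ext_iff] at *
  omega

lemma third_exists {P Q : Fin 3} (h : P ≠ Q) : ∃ R : Fin 3, R ≠ P ∧ R ≠ Q := by
  have hP := P.isLt; have hQ := Q.isLt
  refine ⟨⟨3 - P.val - Q.val, by omega⟩, ?_, ?_⟩ <;>
  · simp only [ne_eq, Fin.ext_iff] at *
    omega

lemma D_row (r : Fin m) (y z : Fin (2*k+1)) : D k (r, y) (r, z) = cd k (y - z) := by
  unfold D; simp [Nat.dist_self]

lemma D_cross {r r' : Fin m} (h : Nat.dist r.val r'.val = 1) (y z : Fin (2*k+1)) :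
    D k (r, y) (r', z) = 1 + cd k (y - z) := by
  unfold D; rw [h]

lemma col_decomp (p y : Fin (2*k+1)) : y = p + (((y - p).val : ℕ) : Fin (2*k+1)) := by
  rw [Fin.cast_val_eq_self]; ring

lemma cd_eps {ε : Fin (2*k+1)} (hε : ε = 1 ∨ ε = -1) (u : Fin (2*k+1)) :
    cd k (ε * u) = cd k u := by
  rcases hε with h | h <;> subst h
  · simp
  · have : (-1 : Fin (2*k+1)) * u = -u := by ring
    rw [this, cd_neg]

lemma cd_pts {ε : Fin (2*k+1)} (hε : ε = 1 ∨ ε = -1) (p : Fin (2*k+1)) (a b : ℕ)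
    (h : Nat.dist a b ≤ k) :
    cd k ((p + ε * (a : Fin (2*k+1))) - (p + ε * (b : Fin (2*k+1)))) = Nat.dist a b := by
  have h1 : (p + ε * (a : Fin (2*k+1))) - (p + ε * (b : Fin (2*k+1)))
      = ε * ((a : Fin (2*k+1)) - (b : Fin (2*k+1))) := by ring
  rw [h1, cd_eps hε]
  rcases le_total b a with hba | hab
  · rw [cd_cast_sub hba (by unfold Nat.dist at h; omega)]
    unfold Nat.dist; omega
  · rw [cd_cast_sub' hab (by unfold Nat.dist at h; omega)]
    unfold Nat.dist; omega

/-- The 5-step chain killing a `P Q^ρ R` pattern in one row (with a neighboring row). -/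
lemma chain (hnr : ¬ Rb k c) {r r' : Fin m} (hrr' : Nat.dist r.val r'.val = 1)
    {ε : Fin (2*k+1)} (hε : ε = 1 ∨ ε = -1)
    {p : Fin (2*k+1)} {ρ : ℕ} (hρ1 : 1 ≤ ρ) (hρk : ρ + 1 ≤ k)
    {P Q R : Fin 3} (hPQ : P ≠ Q) (hQR : Q ≠ R) (hPR : P ≠ R)
    (hp : c (r, p) = P)
    (hrun : ∀ i : ℕ, 1 ≤ i → i ≤ ρ → c (r, p + ε * ((i : ℕ) : Fin (2*k+1))) = Q)
    (hR : c (r, p + ε * (((ρ+1 : ℕ)) : Fin (2*k+1))) = R) : False := by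
  set idx : ℕ → Fin m × Fin (2*k+1) := fun a => (r, p + ε * ((a : ℕ) : Fin (2*k+1))) with hidx
  set idx' : ℕ → Fin m × Fin (2*k+1) := fun a => (r', p + ε * ((a : ℕ) : Fin (2*k+1))) with hidx'
  have hD : ∀ a b : ℕ, Nat.dist a b ≤ k → D k (idx a) (idx b) = Nat.dist a b := by
    intro a b h
    rw [hidx]
    simp only []
    rw [D_row, cd_pts hε _ _ _ h]
  have hD2 : ∀ a b : ℕ, Nat.dist a b ≤ k → D k (idx a) (idx' b) = 1 + Nat.dist a b := by
    intro a b h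
    rw [hidx, hidx']
    simp only []
    rw [D_cross hrr', cd_pts hε _ _ _ h]
  have hD3 : ∀ a b : ℕ, Nat.dist a b ≤ k → D k (idx' a) (idx b) = 1 + Nat.dist a b := by
    intro a b h
    rw [hidx, hidx']
    simp only []
    rw [D_cross (by rw [Nat.dist_comm]; exact hrr'), cd_pts hε _ _ _ h]
  have hp0 : c (idx 0) = P := by
    rw [hidx]; simpa using hp
  have hdist1 : ∀ a : ℕ, Nat.dist a a = 0 := fun a => Nat.dist_self a
  rcases eq_or_lt_of_le hρ1 with hρeq | hρ2
  · -- ρ = 1 : direct rainbow (p, p+1, p+2)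
    apply nr_elim hnr (v₁ := idx 0) (v₂ := idx 1) (v₃ := idx 2)
    · rw [hD 0 1 (by unfold Nat.dist; omega), hD 1 2 (by unfold Nat.dist; omega)]
      unfold Nat.dist; omega
    · rw [hp0, hrun 1 le_rfl (by omega)]; exact hPQ
    · rw [hrun 1 le_rfl (by omega)]
      have : (2 : ℕ) = ρ + 1 := by omega
      rw [this, hR]; exact hQR
    · rw [hp0]
      have : (2 : ℕ) = ρ + 1 := by omega
      rw [this, hR]; exact hPR
  · -- ρ ≥ 2
    have hρ2' : 2 ≤ ρ := hρ2
    -- (a) c (idx' ρ) ≠ P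
    have ha : c (idx' ρ) ≠ P := by
      intro hX
      apply nr_elim hnr (v₁ := idx (ρ+1)) (v₂ := idx ρ) (v₃ := idx' ρ)
      · rw [hD (ρ+1) ρ (by unfold Nat.dist; omega), hD2 ρ ρ (by unfold Nat.dist; omega)]
        unfold Nat.dist; omega
      · rw [hR, hrun ρ (by omega) le_rfl]; exact hQR.symm
      · rw [hrun ρ (by omega) le_rfl, hX]; exact hPQ.symm
      · rw [hR, hX]; exact hPR.symm
    -- (b) c (idx' ρ) ≠ Q, hence = R
    have hb : c (idx' ρ) = R := by
      have hq : c (idx' ρ) ≠ Q := by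
        intro hX
        apply nr_elim hnr (v₁ := idx (ρ+1)) (v₂ := idx 0) (v₃ := idx' ρ)
        · rw [hD (ρ+1) 0 (by unfold Nat.dist; omega), hD2 0 ρ (by unfold Nat.dist; omega)]
          unfold Nat.dist; omega
        · rw [hR, hp0]; exact hPR.symm
        · rw [hp0, hX]; exact hPQ
        · rw [hR, hX]; exact hQR.symm
      rcases tri hPQ hQR hPR (c (idx' ρ)) with h | h | h
      · exact absurd h ha
      · exact absurd h hq
      · exact h
    -- (c) c (idx (2*ρ)) ≠ R
    have hc : c (idx (2*ρ)) ≠ R := by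
      intro hX
      apply nr_elim hnr (v₁ := idx 0) (v₂ := idx ρ) (v₃ := idx (2*ρ))
      · rw [hD 0 ρ (by unfold Nat.dist; omega), hD ρ (2*ρ) (by unfold Nat.dist; omega)]
        unfold Nat.dist; omega
      · rw [hp0, hrun ρ (by omega) le_rfl]; exact hPQ
      · rw [hrun ρ (by omega) le_rfl, hX]; exact hQR
      · rw [hp0, hX]; exact hPR
    -- (d) c (idx (2*ρ)) ≠ Q, hence = P
    have hd : c (idx (2*ρ)) = P := by
      have hq : c (idx (2*ρ)) ≠ Q := by
        intro hX
        apply nr_elim hnr (v₁ := idx 0) (v₂ := idx' ρ) (v₃ := idx (2*ρ))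
        · rw [hD2 0 ρ (by unfold Nat.dist; omega), hD3 ρ (2*ρ) (by unfold Nat.dist; omega)]
          unfold Nat.dist; omega
        · rw [hp0, hb]; exact hPR
        · rw [hb, hX]; exact hQR.symm
        · rw [hp0, hX]; exact hPQ
      rcases tri hPQ hQR hPR (c (idx (2*ρ))) with h | h | h
      · exact h
      · exact absurd h hq
      · exact absurd h hc
    -- (e) final rainbow
    apply nr_elim hnr (v₁ := idx 2) (v₂ := idx (ρ+1)) (v₃ := idx (2*ρ))
    · rw [hD 2 (ρ+1) (by unfold Nat.dist; omega), hD (ρ+1) (2*ρ) (by unfold Nat.dist; omega)]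
      unfold Nat.dist; omega
    · rw [hrun 2 (by omega) (by omega), hR]; exact hQR
    · rw [hR, hd]; exact hPR.symm
    · rw [hrun 2 (by omega) (by omega), hd]; exact hPQ.symm


/-! ### Scanning a row -/

lemma cast_add_split (x : Fin (2*k+1)) (ε : Fin (2*k+1)) (a b : ℕ) :
    x + ε * ((a : ℕ) : Fin (2*k+1)) + ε * ((b : ℕ) : Fin (2*k+1))
      = x + ε * (((a + b : ℕ)) : Fin (2*k+1)) := by
  push_cast; ring

open scoped Classical in
lemma scan_kill (hnr : ¬ Rb k c) {r r' : Fin m} (hrr' : Nat.dist r.val r'.val = 1)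
    {ε : Fin (2*k+1)} (hε : ε = 1 ∨ ε = -1) {x : Fin (2*k+1)}
    (hb : c (r, x) ≠ c (r, x + ε))
    {i : ℕ} (h2i : 2 ≤ i) (hik : i ≤ k)
    (hi1 : c (r, x + ε * ((i : ℕ) : Fin (2*k+1))) ≠ c (r, x))
    (hi2 : c (r, x + ε * ((i : ℕ) : Fin (2*k+1))) ≠ c (r, x + ε)) :
    False := by
  set P := c (r, x) with hP
  set Q := c (r, x + ε) with hQ
  set pred : ℕ → Prop := fun j => 2 ≤ j ∧ c (r, x + ε * ((j : ℕ) : Fin (2*k+1))) ≠ P ∧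
      c (r, x + ε * ((j : ℕ) : Fin (2*k+1))) ≠ Q with hpred
  have hex : ∃ j, pred j := ⟨i, h2i, hi1, hi2⟩
  set i₀ := Nat.find hex with hi₀
  obtain ⟨h2i₀, hW1, hW2⟩ := Nat.find_spec hex
  have hi₀le : i₀ ≤ i := Nat.find_min' hex ⟨h2i, hi1, hi2⟩
  have hi₀k : i₀ ≤ k := le_trans hi₀le hik
  have hPQrange : ∀ j : ℕ, j < i₀ →
      c (r, x + ε * ((j : ℕ) : Fin (2*k+1))) = P ∨ c (r, x + ε * ((j : ℕ) : Fin (2*k+1))) = Q := by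
    intro j hj
    rcases Nat.lt_or_ge j 2 with hj2 | hj2
    · interval_cases j
      · left; rw [hP]; norm_num
      · right; rw [hQ]; norm_num
    · have hmin : ¬(2 ≤ j ∧ c (r, x + ε * ((j : ℕ) : Fin (2*k+1))) ≠ P ∧
          c (r, x + ε * ((j : ℕ) : Fin (2*k+1))) ≠ Q) := Nat.find_min hex hj
      push_neg at hmin
      rcases Classical.em (c (r, x + ε * ((j : ℕ) : Fin (2*k+1))) = P) with h | h
      · exact Or.inl h
      · exact Or.inr (hmin hj2 h)
  set V := c (r, x + ε * (((i₀ - 1 : ℕ)) : Fin (2*k+1))) with hV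
  have hVPQ : V = P ∨ V = Q := hPQrange (i₀ - 1) (by omega)
  set pred2 : ℕ → Prop := fun j => c (r, x + ε * ((j : ℕ) : Fin (2*k+1))) ≠ V with hpred2
  have hwit : ∃ j, j ≤ i₀ - 1 ∧ pred2 j := by
    rcases hVPQ with h | h
    · refine ⟨1, by omega, ?_⟩
      rw [hpred2]; simp only [Nat.cast_one, mul_one]
      rw [← hQ, h]; exact hb.symm
    · refine ⟨0, by omega, ?_⟩
      rw [hpred2]; simp only [Nat.cast_zero, mul_zero, add_zero]
      rw [← hP, h]; exact hb
  obtain ⟨jw, hjw, hjwp⟩ := hwit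
  set j₀ := Nat.findGreatest pred2 (i₀ - 1) with hj₀
  have hj₀p : pred2 j₀ := Nat.findGreatest_spec hjw hjwp
  have hj₀le : j₀ ≤ i₀ - 1 := Nat.findGreatest_le _
  have hj₀max : ∀ t, j₀ < t → t ≤ i₀ - 1 → c (r, x + ε * ((t : ℕ) : Fin (2*k+1))) = V := by
    intro t ht1 ht2
    by_contra hne
    exact Nat.findGreatest_is_greatest ht1 ht2 hne
  have hj₀lt : j₀ < i₀ - 1 := by
    rcases eq_or_lt_of_le hj₀le with h | h
    · exfalso; apply hj₀p; rw [h, ← hV]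
    · exact h
  set U := c (r, x + ε * ((j₀ : ℕ) : Fin (2*k+1))) with hU
  have hUPQ : U = P ∨ U = Q := hPQrange j₀ (by omega)
  have hUV : U ≠ V := hj₀p
  set W := c (r, x + ε * ((i₀ : ℕ) : Fin (2*k+1))) with hW
  have hWU : W ≠ U := by
    rcases hUPQ with h | h <;> rw [h]
    · exact hW1
    · exact hW2
  have hWV : W ≠ V := by
    rcases hVPQ with h | h <;> rw [h]
    · exact hW1
    · exact hW2
  -- chain with p := x + ε*j₀, ρ := i₀ - 1 - j₀
  set ρ := i₀ - 1 - j₀ with hρ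
  apply chain hnr hrr' hε (p := x + ε * ((j₀ : ℕ) : Fin (2*k+1))) (ρ := ρ)
    (by omega) (by omega) hUV hWV.symm (Ne.symm hWU) rfl
  · intro i' h1i' hi'ρ
    rw [cast_add_split]
    exact hj₀max (j₀ + i') (by omega) (by omega)
  · rw [cast_add_split]
    have : j₀ + (ρ + 1) = i₀ := by omega
    rw [this, ← hW]

lemma cast_twok2 : ((2*k+2 : ℕ) : Fin (2*k+1)) = 1 := by
  have h0 : ((2*k+1 : ℕ) : Fin (2*k+1)) = 0 := Fin.natCast_self _
  calc ((2*k+2 : ℕ) : Fin (2*k+1)) = ((2*k+1 : ℕ) : Fin (2*k+1)) + 1 := by push_cast; ring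
    _ = 1 := by rw [h0, zero_add]

/-- any vertex colored differently from both colors of an adjacent row pair sits
in the antipodal column. -/
lemma cover (hnr : ¬ Rb k c) {r r' : Fin m} (hrr' : Nat.dist r.val r'.val = 1) (hk2 : 2 ≤ k)
    {x : Fin (2*k+1)} (hb : c (r, x) ≠ c (r, x + 1))
    {z : Fin (2*k+1)} (hz1 : c (r, z) ≠ c (r, x)) (hz2 : c (r, z) ≠ c (r, x + 1)) :
    z = x + (((k+1 : ℕ)) : Fin (2*k+1)) := by
  by_contra hne
  set t := (z - x).val with ht
  have hzd : z = x + ((t : ℕ) : Fin (2*k+1)) := col_decomp x z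
  have htlt : t < 2*k+1 := (z - x).isLt
  have ht0 : t ≠ 0 := by
    intro h0
    rw [h0] at hzd
    simp at hzd
    rw [hzd] at hz1
    exact hz1 rfl
  have ht1 : t ≠ 1 := by
    intro h1
    rw [h1] at hzd
    simp at hzd
    rw [hzd] at hz2
    exact hz2 rfl
  have htk1 : t ≠ k+1 := by
    intro hkk
    rw [hkk] at hzd
    exact hne hzd
  rcases le_or_gt t k with htk | htk
  · -- forward scan, ε = 1
    apply scan_kill hnr hrr' (Or.inl rfl) (x := x) (i := t)
      (by simpa using hb) (by omega) htk
    · rw [one_mul, ← hzd]; exact hz1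
    · rw [one_mul, ← hzd]; simpa using hz2
  · -- backward scan from x+1, ε = -1
    set i' := 2*k+2 - t with hi'
    have hpos : (x + 1) + (-1 : Fin (2*k+1)) * ((i' : ℕ) : Fin (2*k+1)) = z := by
      rw [hzd]
      have : ((t : ℕ) : Fin (2*k+1)) + ((i' : ℕ) : Fin (2*k+1)) = 1 := by
        have : ((t : ℕ) : Fin (2*k+1)) + ((i' : ℕ) : Fin (2*k+1)) = ((t + i' : ℕ) : Fin (2*k+1)) := by
          push_cast; ring
        rw [this, show t + i' = 2*k+2 from by omega, cast_twok2]
      linear_combination -this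
    apply scan_kill hnr hrr' (Or.inr rfl) (x := x + 1) (i := i')
      (show c (r, x+1) ≠ c (r, (x+1) + (-1)) by
        have : (x + 1) + (-1 : Fin (2*k+1)) = x := by ring
        rw [this]; exact hb.symm)
      (by omega) (by omega)
    · rw [hpos]; exact hz2
    · have : (x + 1) + (-1 : Fin (2*k+1)) = x := by ring
      rw [hpos, this]; exact hz1


/-- If some row contains all three colors, there is a rainbow. -/
lemma row_onto_kill (hnr : ¬ Rb k c) (hm2 : 2 ≤ m) (hk1 : 1 ≤ k) {r : Fin m}
    (h3 : ∀ P : Fin 3, ∃ z : Fin (2*k+1), c (r, z) = P) : False := by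
  obtain ⟨r', hrr'⟩ : ∃ r' : Fin m, Nat.dist r.val r'.val = 1 := by
    rcases lt_or_ge (r.val + 1) m with h | h
    · refine ⟨⟨r.val + 1, h⟩, ?_⟩
      show Nat.dist r.val (r.val + 1) = 1
      unfold Nat.dist; omega
    · have h1 : 1 ≤ r.val := by have := r.isLt; omega
      refine ⟨⟨r.val - 1, by have := r.isLt; omega⟩, ?_⟩
      show Nat.dist r.val (r.val - 1) = 1
      unfold Nat.dist; omega
  rcases eq_or_lt_of_le hk1 with hk1' | hk2
  · -- k = 1, n = 3 : any three distinct-colored columns work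
    subst hk1'
    obtain ⟨z0, hz0⟩ := h3 0
    obtain ⟨z1, hz1⟩ := h3 1
    obtain ⟨z2, hz2⟩ := h3 2
    have hcd : ∀ u : Fin (2*1+1), u ≠ 0 → cd 1 u = 1 := by
      intro u hu
      have h1 := u.isLt
      have h0 : u.val ≠ 0 := fun hh => hu (Fin.ext hh)
      unfold cd; omega
    have h01 : z0 ≠ z1 := by intro h; rw [h, hz1] at hz0; exact absurd hz0 (by decide)
    have h12 : z1 ≠ z2 := by intro h; rw [h, hz2] at hz1; exact absurd hz1 (by decide)
    apply nr_elim hnr (v₁ := (r, z0)) (v₂ := (r, z1)) (v₃ := (r, z2))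
    · rw [D_row, D_row, hcd _ (sub_ne_zero.mpr h01), hcd _ (sub_ne_zero.mpr h12)]
    · rw [hz0, hz1]; decide
    · rw [hz1, hz2]; decide
    · rw [hz0, hz2]; decide
  · have hk2' : 2 ≤ k := hk2
    have hnc : ∃ x, c (r, x) ≠ c (r, x + 1) := by
      by_contra hall
      push_neg at hall
      have hstep : ∀ (t : ℕ) (z : Fin (2*k+1)), c (r, z + ((t : ℕ) : Fin (2*k+1))) = c (r, z) := by
        intro t
        induction t with
        | zero => intro z; simp
        | succ t ih =>
          intro z
          have hsplit : z + (((t+1 : ℕ)) : Fin (2*k+1)) = (z + 1) + ((t : ℕ) : Fin (2*k+1)) := by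
            push_cast; ring
          rw [hsplit, ih (z+1), ← hall z]
      obtain ⟨z0, hz0⟩ := h3 0
      obtain ⟨z1, hz1⟩ := h3 1
      have hh := hstep ((z1 - z0).val) z0
      rw [← col_decomp z0 z1] at hh
      rw [hz0, hz1] at hh
      exact absurd hh (by decide)
    obtain ⟨x, hbx⟩ := hnc
    obtain ⟨W, hW1, hW2⟩ := third_exists hbx
    obtain ⟨z, hz⟩ := h3 W
    have hz1 : c (r, z) ≠ c (r, x) := by rw [hz]; exact hW1
    have hz2 : c (r, z) ≠ c (r, x + 1) := by rw [hz]; exact hW2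
    have hzx : z = x + (((k+1 : ℕ)) : Fin (2*k+1)) := cover hnr hrr' hk2' hbx hz1 hz2
    have hone : (1 : Fin (2*k+1)) ≠ 0 := by
      intro h
      have := congrArg Fin.val h
      rw [one_val hk1] at this
      simp at this
    have hkk1 : (((k+1 : ℕ)) : Fin (2*k+1)) + (((k+1 : ℕ)) : Fin (2*k+1)) = 1 := by
      rw [show (((k+1:ℕ)) : Fin (2*k+1)) + (((k+1:ℕ)) : Fin (2*k+1))
          = ((2*k+2 : ℕ) : Fin (2*k+1)) from by push_cast; ring, cast_twok2]
    -- z ± 1 are not z, so their colors are among the boundary colors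
    have hzm1 : z - 1 ≠ x + (((k+1 : ℕ)) : Fin (2*k+1)) := by
      rw [← hzx]; intro h
      apply hone
      linear_combination -h
    have hzp1 : z + 1 ≠ x + (((k+1 : ℕ)) : Fin (2*k+1)) := by
      rw [← hzx]; intro h
      apply hone
      linear_combination h
    have hv1 : c (r, z - 1) = c (r, x) ∨ c (r, z - 1) = c (r, x + 1) := by
      by_contra hno
      push_neg at hno
      exact hzm1 (cover hnr hrr' hk2' hbx hno.1 hno.2)
    have hv2 : c (r, z + 1) = c (r, x) ∨ c (r, z + 1) = c (r, x + 1) := by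
      by_contra hno
      push_neg at hno
      exact hzp1 (cover hnr hrr' hk2' hbx hno.1 hno.2)
    -- helper: boundary (z-1, z)
    have hbz1 : ∀ y : Fin (2*k+1), c (r, y) ≠ c (r, z - 1) → c (r, y) ≠ c (r, z) →
        y = x := by
      intro y hy1 hy2
      have hb' : c (r, z - 1) ≠ c (r, (z - 1) + 1) := by
        rw [sub_add_cancel]
        rcases hv1 with h | h <;> rw [h]
        · exact hz1.symm
        · exact hz2.symm
      have := cover hnr hrr' hk2' hb' hy1 (by rwa [sub_add_cancel])
      rw [this, hzx]
      have harith : ((x + (((k+1:ℕ)) : Fin (2*k+1))) - 1) + (((k+1:ℕ)) : Fin (2*k+1)) = x := by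
        linear_combination hkk1
      rw [harith]
    -- helper: boundary (z, z+1)
    have hbz2 : ∀ y : Fin (2*k+1), c (r, y) ≠ c (r, z) → c (r, y) ≠ c (r, z + 1) →
        y = x + 1 := by
      intro y hy1 hy2
      have hb'' : c (r, z) ≠ c (r, z + 1) := by
        rcases hv2 with h | h <;> rw [h]
        · exact hz1
        · exact hz2
      have := cover hnr hrr' hk2' hb'' hy1 hy2
      rw [this, hzx]
      have harith : (x + (((k+1:ℕ)) : Fin (2*k+1))) + (((k+1:ℕ)) : Fin (2*k+1)) = x + 1 := by
        linear_combination hkk1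
      rw [harith]
    -- Case: c(r,z-1) = c(r,x) is impossible
    have hv1' : c (r, z - 1) = c (r, x + 1) := by
      rcases hv1 with h | h
      · exfalso
        have hx1 : (x + 1 : Fin (2*k+1)) = x := by
          apply hbz1 (x+1)
          · rw [h]; exact hbx.symm
          · exact hz2.symm
        apply hone
        linear_combination hx1
      · exact h
    -- Case: c(r,z+1) = c(r,x+1) is impossible
    have hv2' : c (r, z + 1) = c (r, x) := by
      rcases hv2 with h | h
      · exact h
      · exfalso
        have hx1 : (x : Fin (2*k+1)) = x + 1 := by
          apply hbz2 x
          · exact hz1.symm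
          · rw [h]; exact hbx
        apply hone
        linear_combination -hx1
    -- Final: vertex z+1 relative to boundary (z-1, z)
    have hfin : (z + 1 : Fin (2*k+1)) = x := by
      apply hbz1 (z+1)
      · rw [hv2', hv1']; exact hbx
      · rw [hv2']; exact hz1.symm
    rw [hzx] at hfin
    have : (((k+2 : ℕ)) : Fin (2*k+1)) = 0 := by
      have : (((k+1 : ℕ)) : Fin (2*k+1)) + 1 = 0 := by linear_combination hfin
      rw [← this]; push_cast; ring
    have hval := congrArg Fin.val this
    rw [val_cast_of_le (by omega)] at hval
    simp at hval


/-- Structured two-row case. -/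
lemma two_rows_kill (hnr : ¬ Rb k c) (hk1 : 1 ≤ k) {r0 r1 : Fin m} (h01 : r0.val + 1 = r1.val)
    {A B C3 : Fin 3} (hAB : A ≠ B) (hBC : B ≠ C3) (hAC : A ≠ C3)
    (hrow0 : ∀ y, c (r0, y) ≠ B) (hrow1 : ∀ y, c (r1, y) ≠ A)
    (hA : ∃ y, c (r0, y) = A) (hB : ∃ y, c (r1, y) = B)
    (hC : (∃ y, c (r0, y) = C3) ∨ (∃ y, c (r1, y) = C3)) : False := by
  have hdist : Nat.dist r0.val r1.val = 1 := by unfold Nat.dist; omega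
  have hdist' : Nat.dist r1.val r0.val = 1 := by unfold Nat.dist; omega
  have cd1 : cd k (1 : Fin (2*k+1)) = 1 := by
    have h1 : ((1:ℕ) : Fin (2*k+1)) = 1 := Nat.cast_one
    rw [← h1, cd_cast hk1]
  -- Claim 1: no column has (A above, B below)
  have claim1 : ∀ p : Fin (2*k+1), ¬ (c (r0, p) = A ∧ c (r1, p) = B) := by
    intro p hp
    have hstep : ∀ q : Fin (2*k+1), c (r0, q) = A ∧ c (r1, q) = B →
        c (r0, q+1) = A ∧ c (r1, q+1) = B := by
      rintro q ⟨hqA, hqB⟩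
      constructor
      · have hnc : c (r0, q+1) ≠ C3 := by
          intro hcc
          apply nr_elim hnr (v₁ := (r1, q)) (v₂ := (r0, q)) (v₃ := (r0, q+1))
          · rw [D_cross hdist', D_row, sub_self, cd_zero,
              show q - (q+1) = -(1 : Fin (2*k+1)) from by ring, cd_neg, cd1]
          · rw [hqB, hqA]; exact hAB.symm
          · rw [hqA, hcc]; exact hAC
          · rw [hqB, hcc]; exact hBC
        rcases tri hAB hBC hAC (c (r0, q+1)) with h | h | h
        · exact h
        · exact absurd h (hrow0 _)
        · exact absurd h hnc
      · have hnc : c (r1, q+1) ≠ C3 := by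
          intro hcc
          apply nr_elim hnr (v₁ := (r0, q)) (v₂ := (r1, q)) (v₃ := (r1, q+1))
          · rw [D_cross hdist, D_row, sub_self, cd_zero,
              show q - (q+1) = -(1 : Fin (2*k+1)) from by ring, cd_neg, cd1]
          · rw [hqB, hqA]; exact hAB
          · rw [hqB, hcc]; exact hBC
          · rw [hqA, hcc]; exact hAC
        rcases tri hAB hBC hAC (c (r1, q+1)) with h | h | h
        · exact absurd h (hrow1 _)
        · exact h
        · exact absurd h hnc
    have hall : ∀ t : ℕ, c (r0, p + ((t:ℕ) : Fin (2*k+1))) = A ∧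
        c (r1, p + ((t:ℕ) : Fin (2*k+1))) = B := by
      intro t
      induction t with
      | zero => simpa using hp
      | succ t ih =>
        have := hstep _ ih
        have harr : p + ((t:ℕ) : Fin (2*k+1)) + 1 = p + (((t+1:ℕ)) : Fin (2*k+1)) := by
          push_cast; ring
        rwa [harr] at this
    rcases hC with ⟨y, hy⟩ | ⟨y, hy⟩
    · have := (hall ((y - p).val)).1
      rw [← col_decomp p y] at this
      rw [this] at hy
      exact hAC hy
    · have := (hall ((y - p).val)).2
      rw [← col_decomp p y] at this
      rw [this] at hy
      exact hBC hy
  -- Claim 2 : reflection about an A-column preserves B-columns of row 1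
  have claim2 : ∀ a z : Fin (2*k+1), c (r0, a) = A → c (r1, z) = B →
      c (r1, 2*a - z) = B := by
    intro a z ha hbz
    have hnc : c (r1, 2*a - z) ≠ C3 := by
      intro hcc
      apply nr_elim hnr (v₁ := (r1, z)) (v₂ := (r0, a)) (v₃ := (r1, 2*a - z))
      · rw [D_cross hdist', D_cross hdist,
          show a - (2*a - z) = z - a from by ring]
      · rw [hbz, ha]; exact hAB.symm
      · rw [ha, hcc]; exact hAC
      · rw [hbz, hcc]; exact hBC
    rcases tri hAB hBC hAC (c (r1, 2*a - z)) with h | h | h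
    · exact absurd h (hrow1 _)
    · exact h
    · exact absurd h hnc
  -- Claim 3 : reflection about a B-column preserves A-columns of row 0
  have claim3 : ∀ b z : Fin (2*k+1), c (r1, b) = B → c (r0, z) = A →
      c (r0, 2*b - z) = A := by
    intro b z hbb haz
    have hnc : c (r0, 2*b - z) ≠ C3 := by
      intro hcc
      apply nr_elim hnr (v₁ := (r0, z)) (v₂ := (r1, b)) (v₃ := (r0, 2*b - z))
      · rw [D_cross hdist, D_cross hdist',
          show b - (2*b - z) = z - b from by ring]
      · rw [hbb, haz]; exact hAB
      · rw [hbb, hcc]; exact hBC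
      · rw [haz, hcc]; exact hAC
    rcases tri hAB hBC hAC (c (r0, 2*b - z)) with h | h | h
    · exact h
    · exact absurd h (hrow0 _)
    · exact absurd h hnc
  obtain ⟨a, ha⟩ := hA
  obtain ⟨b, hb⟩ := hB
  have hstepB : ∀ s : Fin (2*k+1), c (r1, s) = B → c (r1, s + 4*(b - a)) = B := by
    intro s hs
    have h1 : c (r1, 2*a - s) = B := claim2 a s ha hs
    have ha' : c (r0, 2*b - a) = A := claim3 b a hb ha
    have h2 : c (r1, 2*(2*b - a) - (2*a - s)) = B := claim2 _ _ ha' h1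
    have harr : 2*(2*b - a) - (2*a - s) = s + 4*(b-a) := by ring
    rwa [harr] at h2
  have hiter : ∀ t : ℕ, c (r1, b + ((t:ℕ) : Fin (2*k+1)) * (4*(b-a))) = B := by
    intro t; induction t with
    | zero => simpa using hb
    | succ t ih =>
      have := hstepB _ ih
      have harr : b + ((t:ℕ) : Fin (2*k+1))*(4*(b-a)) + 4*(b-a)
          = b + (((t+1 : ℕ)) : Fin (2*k+1))*(4*(b-a)) := by push_cast; ring
      rwa [harr] at this
  have h4T : ((2*k*(k+1)*(k+1) : ℕ) : Fin (2*k+1)) * 4 = -1 := by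
    have h1 : ((2*k+2 : ℕ) : Fin (2*k+1)) = 1 := cast_twok2
    have h2 : ((2*k : ℕ) : Fin (2*k+1)) = -1 := by
      have hh : ((2*k:ℕ) : Fin (2*k+1)) + 1 = 0 := by
        rw [show ((2*k:ℕ) : Fin (2*k+1)) + 1 = ((2*k+1 : ℕ) : Fin (2*k+1)) from by push_cast; ring,
          Fin.natCast_self]
      linear_combination hh
    calc ((2*k*(k+1)*(k+1) : ℕ) : Fin (2*k+1)) * 4
        = ((2*k:ℕ) : Fin (2*k+1)) * ((2*k+2:ℕ) : Fin (2*k+1)) * ((2*k+2:ℕ) : Fin (2*k+1)) := by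
          push_cast; ring
      _ = -1 := by rw [h1, h2]; ring
  have hBa : c (r1, a) = B := by
    have hit := hiter (2*k*(k+1)*(k+1))
    have harr : b + ((2*k*(k+1)*(k+1) : ℕ) : Fin (2*k+1)) * (4*(b-a)) = a := by
      have hh : ((2*k*(k+1)*(k+1):ℕ) : Fin (2*k+1)) * (4*(b-a)) = -(b-a) := by
        calc ((2*k*(k+1)*(k+1):ℕ) : Fin (2*k+1)) * (4*(b-a))
            = (((2*k*(k+1)*(k+1):ℕ) : Fin (2*k+1)) * 4) * (b-a) := by ring
          _ = -(b-a) := by rw [h4T]; ring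
      rw [hh]; ring
    rwa [harr] at hit
  exact claim1 a ⟨ha, hBa⟩


/-- Structured strip case for windows of height `w+1 ≥ 3`. -/
lemma strip_kill (hnr : ¬ Rb k c) (hk1 : 1 ≤ k) {lo w : ℕ} (hw2 : 2 ≤ w) (hhi : lo + w < m)
    {A B C3 : Fin 3} (hAB : A ≠ B) (hBC : B ≠ C3) (hAC : A ≠ C3)
    (hA : ∃ y, c (⟨lo, by omega⟩, y) = A)
    (hB : ∃ y, c (⟨lo + w, hhi⟩, y) = B)
    (hrow_lo : ∀ y, c (⟨lo, by omega⟩, y) ≠ B)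
    (hrow_hi : ∀ y, c (⟨lo + w, hhi⟩, y) ≠ A)
    (hint : ∀ (j : ℕ) (hj : lo + j < m), 1 ≤ j → j < w → ∀ y, c (⟨lo + j, hj⟩, y) = C3) :
    False := by
  have hlo_lt : lo < m := by omega
  set rlo : Fin m := ⟨lo, hlo_lt⟩ with hrlo
  set rhi : Fin m := ⟨lo + w, hhi⟩ with hrhi
  obtain ⟨p, hp⟩ := hA
  obtain ⟨q, hq⟩ := hB
  rcases Nat.even_or_odd w with hE | hO
  · -- w even: midpoint construction
    obtain ⟨h, hh⟩ := hE
    have hmid_lt : lo + h < m := by omega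
    set rmid : Fin m := ⟨lo + h, hmid_lt⟩ with hrmid
    set y : Fin (2*k+1) := (((k+1 : ℕ)) : Fin (2*k+1)) * (p + q) with hy
    have hmidc : c (rmid, y) = C3 := hint h hmid_lt (by omega) (by omega) y
    have h2 : (2 : Fin (2*k+1)) * (((k+1:ℕ)) : Fin (2*k+1)) = 1 := by
      calc (2 : Fin (2*k+1)) * (((k+1:ℕ)) : Fin (2*k+1))
          = ((2*k+2 : ℕ) : Fin (2*k+1)) := by push_cast; ring
        _ = 1 := cast_twok2
    have hsym : y - p = q - y := by
      have h2y : (2 : Fin (2*k+1)) * y = p + q := by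
        rw [hy]
        calc (2:Fin (2*k+1)) * ((((k+1:ℕ)):Fin (2*k+1)) * (p+q))
            = ((2:Fin (2*k+1)) * (((k+1:ℕ)):Fin (2*k+1))) * (p+q) := by ring
          _ = p + q := by rw [h2]; ring
      linear_combination h2y
    apply nr_elim hnr (v₁ := (rlo, p)) (v₂ := (rmid, y)) (v₃ := (rhi, q))
    · unfold D
      show Nat.dist lo (lo+h) + cd k (p - y) = Nat.dist (lo+h) (lo+w) + cd k (y - q)
      have hcd : p - y = y - q := by linear_combination -hsym
      rw [hcd]
      unfold Nat.dist; omega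
    · rw [hp, hmidc]; exact hAC
    · rw [hmidc, hq]; exact hBC.symm
    · rw [hp, hq]; exact hAB
  · -- w odd (hence w ≥ 3)
    have hw3 : 3 ≤ w := by
      rcases hO with ⟨t, ht⟩; omega
    by_cases hex : ∃ p' q', c (rlo, p') = A ∧ c (rhi, q') = B ∧ cd k (q' - p') ≤ k - 1
    · obtain ⟨p', q', hp', hq', he⟩ := hex
      set e := cd k (q' - p') with hee
      set l := max 1 (w + e - k) with hl
      have hl1 : 1 ≤ l := le_max_left _ _
      have hlw : l ≤ w - 1 := by omega
      set δ := w + e - l with hδ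
      have hδk : δ ≤ k := by omega
      have hrowl : lo + l < m := by omega
      set rl : Fin m := ⟨lo + l, hrowl⟩ with hrl
      set yy := p' + ((δ : ℕ) : Fin (2*k+1)) with hyy
      have hCy : c (rl, yy) = C3 := hint l hrowl (by omega) (by omega) _
      apply nr_elim hnr (v₁ := (rl, yy)) (v₂ := (rlo, p')) (v₃ := (rhi, q'))
      · unfold D
        show Nat.dist (lo + l) lo + cd k (yy - p') = Nat.dist lo (lo + w) + cd k (p' - q')
        have h1 : cd k (yy - p') = δ := by
          rw [hyy, show p' + ((δ:ℕ) : Fin (2*k+1)) - p' = ((δ:ℕ) : Fin (2*k+1)) from by ring,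
            cd_cast hδk]
        have h2 : cd k (p' - q') = e := by
          rw [show p' - q' = -(q' - p') from by ring, cd_neg, ← hee]
        rw [h1, h2]
        unfold Nat.dist; omega
      · rw [hCy, hp']; exact hAC.symm
      · rw [hp', hq']; exact hAB
      · rw [hCy, hq']; exact hBC.symm
    · -- stuck case: every A/B pair at circular distance exactly k
      push_neg at hex
      have hek : ∀ p' q', c (rlo, p') = A → c (rhi, q') = B → cd k (q' - p') = k := by
        intro p' q' h1 h2
        have hlt := hex p' q' h1 h2
        have hle := cd_le_k (k := k) (q' - p')
        omega
      set u1 := p + ((k:ℕ) : Fin (2*k+1)) with hu1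
      set u2 := p + (((k+1:ℕ)) : Fin (2*k+1)) with hu2
      have hBloc : ∀ q', c (rhi, q') = B → q' = u1 ∨ q' = u2 := by
        intro q' h
        rcases cd_eq_cases (q' - p) le_rfl (hek p q' hp h) with h1 | h1
        · left; rw [hu1]; linear_combination h1
        · right; rw [hu2, ← neg_cast_k]; linear_combination h1
      by_cases hball : c (rhi, u1) = B ∧ c (rhi, u2) = B
      · -- both are B: then p-1 is not an A-column, hence C3; rainbow around (rhi,u1)
        have hck2 : cd k (((k+2:ℕ)) : Fin (2*k+1)) ≠ k := by
          rcases eq_or_lt_of_le hk1 with h1 | h2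
          · subst h1; decide
          · have hlt : k + 2 < 2*k+1 := by omega
            unfold cd
            rw [val_cast_of_le hlt]
            omega
        have hAnotpm1 : c (rlo, p - 1) ≠ A := by
          intro hA1
          have h2 := hek _ _ hA1 hball.2
          have harr : u2 - (p - 1) = (((k+2:ℕ)) : Fin (2*k+1)) := by
            rw [hu2]; push_cast; ring
          rw [harr] at h2
          exact hck2 h2
        have hCm1 : c (rlo, p - 1) = C3 := by
          rcases tri hAB hBC hAC (c (rlo, p-1)) with h | h | h
          · exact absurd h hAnotpm1
          · exact absurd h (hrow_lo _)
          · exact h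
        apply nr_elim hnr (v₁ := (rlo, p - 1)) (v₂ := (rhi, u1)) (v₃ := (rlo, p))
        · unfold D
          show Nat.dist lo (lo+w) + cd k ((p-1) - u1) = Nat.dist (lo+w) lo + cd k (u1 - p)
          have h1 : cd k ((p-1) - u1) = k := by
            rw [show (p-1) - u1 = -((((k+1:ℕ)):Fin (2*k+1))) from by rw [hu1]; push_cast; ring,
              cd_neg, cd_cast_k1 hk1]
          have h2 : cd k (u1 - p) = k := by
            rw [show u1 - p = ((k:ℕ) : Fin (2*k+1)) from by rw [hu1]; ring, cd_cast le_rfl]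
          rw [h1, h2, Nat.dist_comm]
        · rw [hCm1, hball.1]; exact hBC.symm
        · rw [hball.1, hp]; exact hAB.symm
        · rw [hCm1, hp]; exact hAC.symm
      · -- one of u1,u2 is C3
        have hcdu1 : cd k (u1 - p) = k := by
          rw [show u1 - p = ((k:ℕ) : Fin (2*k+1)) from by rw [hu1]; ring, cd_cast le_rfl]
        have hcdu2 : cd k (u2 - p) = k := by
          rw [show u2 - p = (((k+1:ℕ)) : Fin (2*k+1)) from by rw [hu2]; ring, cd_cast_k1 hk1]
        have hqBC : ∃ qB qC, c (rhi, qB) = B ∧ c (rhi, qC) = C3 ∧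
            cd k (qB - p) = k ∧ cd k (qC - p) = k := by
          rcases hBloc q hq with h | h
          · have hu1B : c (rhi, u1) = B := h ▸ hq
            have hu2notB : c (rhi, u2) ≠ B := fun hh => hball ⟨hu1B, hh⟩
            have hu2C : c (rhi, u2) = C3 := by
              rcases tri hAB hBC hAC (c (rhi, u2)) with h' | h' | h'
              · exact absurd h' (hrow_hi _)
              · exact absurd h' hu2notB
              · exact h'
            exact ⟨u1, u2, hu1B, hu2C, hcdu1, hcdu2⟩
          · have hu2B : c (rhi, u2) = B := h ▸ hq
            have hu1notB : c (rhi, u1) ≠ B := fun hh => hball ⟨hh, hu2B⟩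
            have hu1C : c (rhi, u1) = C3 := by
              rcases tri hAB hBC hAC (c (rhi, u1)) with h' | h' | h'
              · exact absurd h' (hrow_hi _)
              · exact absurd h' hu1notB
              · exact h'
            exact ⟨u2, u1, hu2B, hu1C, hcdu2, hcdu1⟩
        obtain ⟨qB, qC, hqB, hqC, hcdB, hcdC⟩ := hqBC
        apply nr_elim hnr (v₁ := (rhi, qC)) (v₂ := (rlo, p)) (v₃ := (rhi, qB))
        · unfold D
          show Nat.dist (lo+w) lo + cd k (qC - p) = Nat.dist lo (lo+w) + cd k (p - qB)
          rw [hcdC, show p - qB = -(qB - p) from by ring, cd_neg, hcdB, Nat.dist_comm]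
        · rw [hqC, hp]; exact hAC.symm
        · rw [hp, hqB]; exact hAB
        · rw [hqC, hqB]; exact hBC.symm


/-- Descent over row windows. -/
lemma window_kill (hnr : ¬ Rb k c) (hm2 : 2 ≤ m) (hk1 : 1 ≤ k) :
    ∀ (w lo : ℕ), lo + w < m →
      (∀ P : Fin 3, ∃ v : Fin m × Fin (2*k+1), c v = P ∧ lo ≤ v.1.val ∧ v.1.val ≤ lo + w) →
      False := by
  intro w
  induction w with
  | zero =>
    intro lo hlt h3
    apply row_onto_kill hnr hm2 hk1 (r := ⟨lo, by omega⟩)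
    intro P
    obtain ⟨v, hv, h1, h2⟩ := h3 P
    refine ⟨v.2, ?_⟩
    have hfst : v.1 = ⟨lo, by omega⟩ := Fin.ext (by simp; omega)
    rw [← hfst, Prod.mk.eta]
    exact hv
  | succ w ih =>
    intro lo hlt h3
    by_cases hup : ∀ P : Fin 3, ∃ v, c v = P ∧ lo+1 ≤ v.1.val ∧ v.1.val ≤ (lo+1) + w
    · exact ih (lo+1) (by omega) hup
    by_cases hdn : ∀ P : Fin 3, ∃ v, c v = P ∧ lo ≤ v.1.val ∧ v.1.val ≤ lo + w
    · exact ih lo (by omega) hdn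
    push_neg at hup hdn
    obtain ⟨X, hX⟩ := hup
    obtain ⟨Y, hY⟩ := hdn
    obtain ⟨vX, hvX, hX1, hX2⟩ := h3 X
    obtain ⟨vY, hvY, hY1, hY2⟩ := h3 Y
    have hXlo : vX.1.val = lo := by
      by_contra hne
      exact absurd (hX vX hvX (by omega)) (by omega)
    have hYhi : vY.1.val = lo + (w+1) := by
      have := hY vY hvY hY1
      omega
    have hXY : X ≠ Y := by
      intro h
      subst h
      have := hY vX hvX (by omega)
      omega
    obtain ⟨Z, hZX, hZY⟩ := third_exists hXY
    -- X absent from rows lo+1 .. lo+w+1 ; Y absent from rows lo .. lo+w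
    have hXabs : ∀ (j : ℕ) (hj : lo + j < m) (y : Fin (2*k+1)),
        1 ≤ j → j ≤ w+1 → c (⟨lo+j, hj⟩, y) ≠ X := by
      intro j hj y h1j hjw hcc
      have := hX (⟨lo+j, hj⟩, y) hcc (by simp; omega)
      simp at this
      omega
    have hYabs : ∀ (j : ℕ) (hj : lo + j < m) (y : Fin (2*k+1)),
        j ≤ w → c (⟨lo+j, hj⟩, y) ≠ Y := by
      intro j hj y hjw hcc
      have := hY (⟨lo+j, hj⟩, y) hcc (by simp)
      simp at this
      omega
    have hXpres : ∃ y, c ((⟨lo, by omega⟩ : Fin m), y) = X := by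
      refine ⟨vX.2, ?_⟩
      have hfst : vX.1 = ⟨lo, by omega⟩ := Fin.ext (by simp; omega)
      rw [← hfst, Prod.mk.eta]; exact hvX
    have hhi_lt : lo + (w+1) < m := hlt
    have hYpres : ∃ y, c ((⟨lo + (w+1), hhi_lt⟩ : Fin m), y) = Y := by
      refine ⟨vY.2, ?_⟩
      have hfst : vY.1 = ⟨lo + (w+1), hhi_lt⟩ := Fin.ext (by simp; omega)
      rw [← hfst, Prod.mk.eta]; exact hvY
    rcases Nat.eq_zero_or_pos w with hw0 | hwpos
    · -- window of two rows
      subst hw0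
      apply two_rows_kill hnr hk1 (r0 := ⟨lo, by omega⟩) (r1 := ⟨lo+1, by omega⟩)
        (by simp) hXY hZY.symm hZX.symm
        (fun y => hYabs 0 (by omega) y (by omega))
        (fun y => hXabs 1 (by omega) y (by omega) (by omega))
        hXpres (by simpa using hYpres)
      -- C present
      obtain ⟨vZ, hvZ, hZ1, hZ2⟩ := h3 Z
      rcases Nat.eq_or_lt_of_le hZ1 with hZlo | hZlo'
      · left
        refine ⟨vZ.2, ?_⟩
        have hfst : vZ.1 = ⟨lo, by omega⟩ := Fin.ext (by simp; omega)
        rw [← hfst, Prod.mk.eta]; exact hvZ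
      · right
        refine ⟨vZ.2, ?_⟩
        have hfst : vZ.1 = ⟨lo+1, by omega⟩ := Fin.ext (by simp; omega)
        rw [← hfst, Prod.mk.eta]; exact hvZ
    · -- strip of height ≥ 3
      apply strip_kill hnr hk1 (lo := lo) (w := w+1) (by omega) hhi_lt
        hXY hZY.symm hZX.symm hXpres hYpres
        (fun y => hYabs 0 (by omega) y (by omega))
        (fun y => hXabs (w+1) hhi_lt y (by omega) (by omega))
      intro j hj h1j hjw y
      rcases tri hXY hZY.symm hZX.symm (c (⟨lo + j, hj⟩, y)) with h | h | h
      · exact absurd h (hXabs j hj y h1j (by omega))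
      · exact absurd h (hYabs j hj y (by omega))
      · exact h

lemma main_rb (hm2 : 2 ≤ m) (hk1 : 1 ≤ k) (hsurj : Function.Surjective c) : Rb k c := by
  by_contra hnr
  apply window_kill hnr hm2 hk1 (m - 1) 0 (by omega)
  intro P
  obtain ⟨v, hv⟩ := hsurj P
  exact ⟨v, hv, by omega, by have := v.1.isLt; omega⟩

end AWProof

theorem stmt_8 (m k : ℕ) (hm : 2 ≤ m) (hk : 1 ≤ k) :
    aw (pathGraph m □ cycleGraph (2 * k + 1)) = 3 := by
  have hmain : ∀ c : Fin m × Fin (2*k+1) → Fin 3, Function.Surjective c →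
      HasRainbow3AP (pathGraph m □ cycleGraph (2*k+1)) c := by
    intro c hc
    obtain ⟨v₁, v₂, v₃, hd, h12, h23, h13⟩ := AWProof.main_rb hm hk hc
    exact ⟨v₁, v₂, v₃, by
      rw [AWProof.dist_eq_D hk v₁ v₂, AWProof.dist_eq_D hk v₂ v₃]; exact hd, h12, h23, h13⟩
  have h3S : 3 ∈ {r : ℕ | 0 < r ∧
      ∀ c : Fin m × Fin (2*k+1) → Fin r, Function.Surjective c →
        HasRainbow3AP (pathGraph m □ cycleGraph (2*k+1)) c} := ⟨by norm_num, hmain⟩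
  apply le_antisymm
  · exact Nat.sInf_le h3S
  · apply le_csInf ⟨3, h3S⟩
    rintro b ⟨hb0, hball⟩
    by_contra hlt
    push_neg at hlt
    interval_cases b
    · -- one color
      have h1 := hball (fun _ => 0) (fun y => ⟨((⟨0, by omega⟩ : Fin m), (0 : Fin (2*k+1))),
        Subsingleton.elim _ _⟩)
      obtain ⟨v₁, v₂, v₃, _, h12, _, _⟩ := h1
      exact h12 (Subsingleton.elim _ _)
    · -- two colors
      have hsurj2 : Function.Surjective
          (fun v : Fin m × Fin (2*k+1) => if v.1.val = 0 then (0 : Fin 2) else 1) := by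
        intro y
        fin_cases y
        · exact ⟨((⟨0, by omega⟩ : Fin m), (0 : Fin (2*k+1))), by simp⟩
        · exact ⟨((⟨1, by omega⟩ : Fin m), (0 : Fin (2*k+1))), by simp⟩
      obtain ⟨v₁, v₂, v₃, _, h12, h23, h13⟩ := hball _ hsurj2
      set a := (fun v : Fin m × Fin (2*k+1) => if v.1.val = 0 then (0 : Fin 2) else 1) v₁
      set b := (fun v : Fin m × Fin (2*k+1) => if v.1.val = 0 then (0 : Fin 2) else 1) v₂
      set d := (fun v : Fin m × Fin (2*k+1) => if v.1.val = 0 then (0 : Fin 2) else 1) v₃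
      have ha := a.isLt
      have hbb := b.isLt
      have hd := d.isLt
      simp only [ne_eq, Fin.ext_iff] at h12 h23 h13
      omega
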